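/- For every complex number w with |1 − w| ≤ 1, one has Re(¼w² + ⅙w + 1/12) ≥ 1/36. Consequently, since ¼(w⁴ − 1) − ⅓(w³ − 1) = (w − 1)²·(¼w² + ⅙w + 1/12), one also has |¼(w⁴ − 1) − ⅓(w³ − 1)| ≥ (1/36)·|w − 1|². -/

import Mathlib

/-- For every complex number `w` with `|1 - w| ≤ 1`, the real part of
`¼w² + ⅙w + 1/12` is at least `1/36`; consequently, since
`¼(w⁴ − 1) − ⅓(w³ − 1) = (w − 1)²(¼w² + ⅙w + 1/12)`, one also has
`|¼(w⁴ − 1) − ⅓(w³ − 1)| ≥ (1/36)|w − 1|²`. -/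
theorem pointwise_algebraic_inequality (w : ℂ) (hw : ‖1 - w‖ ≤ 1) :
    (1 / 36 : ℝ) ≤ ((1 / 4 : ℂ) * w ^ 2 + (1 / 6 : ℂ) * w + (1 / 12 : ℂ)).re ∧
      (1 / 36 : ℝ) * ‖w - 1‖ ^ 2 ≤
        ‖(1 / 4 : ℂ) * (w ^ 4 - 1) - (1 / 3 : ℂ) * (w ^ 3 - 1)‖ := by
  have hsq : ‖1 - w‖ ^ 2 ≤ 1 := by nlinarith [norm_nonneg (1 - w)]
  rw [show ‖1 - w‖ = ‖1 - w‖ from rfl, Complex.sq_norm] at hsq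
  simp [Complex.normSq_apply, Complex.sub_re, Complex.sub_im] at hsq
  set x := w.re
  set y := w.im
  have h1 : (1 / 36 : ℝ) ≤ ((1 / 4 : ℂ) * w ^ 2 + (1 / 6 : ℂ) * w + (1 / 12 : ℂ)).re := by
    simp [Complex.add_re, Complex.mul_re, pow_two]
    ring_nf
    nlinarith [sq_nonneg (x - 1/3), sq_nonneg y, sq_nonneg (1 - x)]
  refine ⟨h1, ?_⟩
  have hfact : (1 / 4 : ℂ) * (w ^ 4 - 1) - (1 / 3 : ℂ) * (w ^ 3 - 1)
      = (w - 1) ^ 2 * ((1 / 4 : ℂ) * w ^ 2 + (1 / 6 : ℂ) * w + (1 / 12 : ℂ)) := by ring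
  rw [hfact, norm_mul]
  have h2 : (1 / 36 : ℝ) ≤ ‖(1 / 4 : ℂ) * w ^ 2 + (1 / 6 : ℂ) * w + (1 / 12 : ℂ)‖ :=
    h1.trans (Complex.re_le_norm _)
  have h3 : ‖(w - 1) ^ 2‖ = ‖w - 1‖ ^ 2 := by simp [norm_pow]
  rw [h3]
  nlinarith [norm_nonneg (w - 1), sq_nonneg ‖w - 1‖]
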